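/- Let f₁: [a₁,b₁] → R and f₂: [a₂,b₂] → R be smooth with f_i > 0, f_i' > 0, f_i'' > 0, satisfying f_i'' < ((n−1)/(2f_i))(1 − (f_i')²) (positive scalar curvature of dt²+f_i²g_*), and f₁(b₁) < f₂(a₂), f₁'(b₁) = f₂'(a₂). After translating so that a₂ − b₁ = (f₂(a₂) − f₁(b₁))/f₁'(b₁), the C^{1,1} function f̃ on [a₁,b₂] that equals f₁ on [a₁,b₁], equals f₂ on [a₂,b₂], and is the linear segment joining (b₁,f₁(b₁)) to (a₂,f₂(a₂)) on [b₁,a₂], satisfies: f̃ > 0, f̃' > 0, f̃ is C¹, and wherever f̃'' is defined it satisfies f̃'' < ((n−1)/(2f̃))(1 − (f̃')²). -/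

import Mathlib

/- Gluing lemma: the C^{1,1} function F obtained by joining f₁, a linear segment of slope
f₁'(b₁) = f₂'(a₂), and f₂ is positive, C¹ with positive derivative, and satisfies the
strict positive-scalar-curvature inequality F'' < ((n-1)/(2F))(1-(F')²) wherever F'' is
defined (i.e. on the open subintervals). -/
theorem stmt_13 (n : ℕ) (hn : 2 ≤ n) (a₁ b₁ a₂ b₂ : ℝ)
    (hab1 : a₁ < b₁) (hba : b₁ < a₂) (hab2 : a₂ < b₂)
    (f₁ f₂ f₁' f₂' f₁'' f₂'' : ℝ → ℝ)
    (hd1 : ∀ t ∈ Set.Icc a₁ b₁, HasDerivAt f₁ (f₁' t) t ∧ HasDerivAt f₁' (f₁'' t) t)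
    (hd2 : ∀ t ∈ Set.Icc a₂ b₂, HasDerivAt f₂ (f₂' t) t ∧ HasDerivAt f₂' (f₂'' t) t)
    (hc1 : ContinuousOn f₁'' (Set.Icc a₁ b₁)) (hc2 : ContinuousOn f₂'' (Set.Icc a₂ b₂))
    (hpos1 : ∀ t ∈ Set.Icc a₁ b₁, 0 < f₁ t ∧ 0 < f₁' t ∧ 0 < f₁'' t)
    (hpos2 : ∀ t ∈ Set.Icc a₂ b₂, 0 < f₂ t ∧ 0 < f₂' t ∧ 0 < f₂'' t)
    (hpsc1 : ∀ t ∈ Set.Icc a₁ b₁, f₁'' t < (((n : ℝ) - 1) / (2 * f₁ t)) * (1 - (f₁' t) ^ 2))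
    (hpsc2 : ∀ t ∈ Set.Icc a₂ b₂, f₂'' t < (((n : ℝ) - 1) / (2 * f₂ t)) * (1 - (f₂' t) ^ 2))
    (hlt : f₁ b₁ < f₂ a₂) (hslope : f₁' b₁ = f₂' a₂)
    (htrans : a₂ - b₁ = (f₂ a₂ - f₁ b₁) / f₁' b₁) :
    ∀ F : ℝ → ℝ,
      (∀ t, F t = if t ≤ b₁ then f₁ t else if t < a₂ then f₁ b₁ + (t - b₁) * f₁' b₁ else f₂ t) →
      (∀ t ∈ Set.Icc a₁ b₂, 0 < F t) ∧
      ∃ F' : ℝ → ℝ, ContinuousOn F' (Set.Icc a₁ b₂) ∧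
        (∀ t ∈ Set.Icc a₁ b₂, HasDerivAt F (F' t) t ∧ 0 < F' t) ∧
        (∀ t ∈ Set.Ioo a₁ b₁ ∪ Set.Ioo b₁ a₂ ∪ Set.Ioo a₂ b₂,
          ∃ c, HasDerivAt F' c t ∧ c < (((n : ℝ) - 1) / (2 * F t)) * (1 - (F' t) ^ 2)) := by
  intro F hF
  have hb1m : b₁ ∈ Set.Icc a₁ b₁ := ⟨hab1.le, le_rfl⟩
  have ha2m : a₂ ∈ Set.Icc a₂ b₂ := ⟨le_rfl, hab2.le⟩
  have hf1b : 0 < f₁ b₁ := (hpos1 b₁ hb1m).1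
  have hd1b : 0 < f₁' b₁ := (hpos1 b₁ hb1m).2.1
  have hn1 : (1 : ℝ) < (n : ℝ) := by exact_mod_cast Nat.lt_of_lt_of_le one_lt_two hn
  have hk : 0 < ((n : ℝ) - 1) / (2 * f₁ b₁) := div_pos (by linarith) (by linarith)
  have hsq : 0 < 1 - (f₁' b₁) ^ 2 := by
    nlinarith [hpsc1 b₁ hb1m, (hpos1 b₁ hb1m).2.2, hk,
      mul_nonneg hk.le (sq_nonneg (f₁' b₁))]
  -- value matching at a₂
  have hval : f₁ b₁ + (a₂ - b₁) * f₁' b₁ = f₂ a₂ := by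
    rw [htrans]; field_simp; ring
  set g : ℝ → ℝ := fun t => f₁ b₁ + (t - b₁) * f₁' b₁ with hgdef
  have hg : ∀ x, HasDerivAt g (f₁' b₁) x := fun x => by
    simpa [hgdef] using (((hasDerivAt_id x).sub_const b₁).mul_const (f₁' b₁)).const_add (f₁ b₁)
  -- piecewise descriptions of F
  have hF1 : ∀ t, t ≤ b₁ → F t = f₁ t := fun t ht => by rw [hF]; simp [ht]
  have hFg : ∀ t, b₁ ≤ t → t ≤ a₂ → F t = g t := by
    intro t ht1 ht2
    rcases eq_or_lt_of_le ht1 with rfl | ht1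
    · rw [hF]; simp [hgdef]
    · rcases eq_or_lt_of_le ht2 with rfl | ht2
      · rw [hF, if_neg (not_le.mpr ht1), if_neg (lt_irrefl _), hgdef]
        exact hval.symm
      · rw [hF, if_neg (not_le.mpr ht1), if_pos ht2]
  have hF2 : ∀ t, a₂ ≤ t → F t = f₂ t := by
    intro t ht
    rw [hF, if_neg (by linarith), if_neg (by linarith)]
  -- the derivative function
  set F' : ℝ → ℝ := fun t => if t ≤ b₁ then f₁' t else if t < a₂ then f₁' b₁ else f₂' t
    with hF'def
  have hF'1 : ∀ t, t ≤ b₁ → F' t = f₁' t := fun t ht => by rw [hF'def]; simp [ht]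
  have hF'g : ∀ t, b₁ ≤ t → t ≤ a₂ → F' t = f₁' b₁ := by
    intro t ht1 ht2
    rcases eq_or_lt_of_le ht1 with rfl | ht1
    · simp [hF'def]
    · rcases eq_or_lt_of_le ht2 with rfl | ht2
      · rw [hF'def]; simp only [not_le.mpr ht1, if_false, lt_irrefl, if_false]
        exact hslope.symm
      · rw [hF'def]; simp [not_le.mpr ht1, ht2]
  have hF'2 : ∀ t, a₂ ≤ t → F' t = f₂' t := by
    intro t ht
    rw [hF'def]; simp only [not_le.mpr (lt_of_lt_of_le hba ht), if_false,
      not_lt.mpr ht, if_neg (not_lt.mpr ht)]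
  -- positivity of F
  have hFpos : ∀ t ∈ Set.Icc a₁ b₂, 0 < F t := by
    intro t ht
    rcases le_or_gt t b₁ with h | h
    · rw [hF1 t h]; exact (hpos1 t ⟨ht.1, h⟩).1
    · rcases le_or_gt t a₂ with h2 | h2
      · rw [hFg t h.le h2, hgdef]
        have : 0 < (t - b₁) * f₁' b₁ := mul_pos (by linarith) hd1b
        simp only; linarith
      · rw [hF2 t h2.le]; exact (hpos2 t ⟨h2.le, ht.2⟩).1
  refine ⟨hFpos, F', ?_, ?_, ?_⟩
  · -- continuity of F'
    intro t ht
    rcases lt_or_ge t b₁ with h | h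
    · refine ((hd1 t ⟨ht.1, h.le⟩).2.continuousAt.congr ?_).continuousWithinAt
      filter_upwards [Iio_mem_nhds h] with s hs using (hF'1 s (le_of_lt hs)).symm
    rcases eq_or_lt_of_le h with rfl | h
    · -- at b₁
      have l : ContinuousWithinAt F' (Set.Iic b₁) b₁ :=
        ((hd1 b₁ hb1m).2.continuousAt.continuousWithinAt).congr
          (fun s hs => hF'1 s hs) (hF'1 b₁ le_rfl)
      have r : ContinuousWithinAt F' (Set.Ici b₁) b₁ := by
        refine (continuousWithinAt_const :
            ContinuousWithinAt (fun _ : ℝ => f₁' b₁) (Set.Ici b₁) b₁).congr_of_eventuallyEq ?_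
          (hF'g b₁ le_rfl hba.le)
        filter_upwards [self_mem_nhdsWithin,
          mem_nhdsWithin_of_mem_nhds (Iio_mem_nhds hba)] with s hs1 hs2
        exact hF'g s hs1 hs2.le
      have := l.union r
      rw [Set.Iic_union_Ici] at this
      exact this.mono (Set.subset_univ _)
    rcases lt_or_ge t a₂ with h2 | h2
    · refine ((continuousAt_const (y := f₁' b₁)).congr ?_).continuousWithinAt
      filter_upwards [Ioo_mem_nhds h h2] with s hs using (hF'g s hs.1.le hs.2.le).symm
    rcases eq_or_lt_of_le h2 with rfl | h2
    · -- at a₂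
      have l : ContinuousWithinAt F' (Set.Iic a₂) a₂ := by
        refine (continuousWithinAt_const :
            ContinuousWithinAt (fun _ : ℝ => f₁' b₁) (Set.Iic a₂) a₂).congr_of_eventuallyEq ?_
          (hF'g a₂ hba.le le_rfl)
        filter_upwards [self_mem_nhdsWithin,
          mem_nhdsWithin_of_mem_nhds (Ioi_mem_nhds hba)] with s hs1 hs2
        exact hF'g s hs2.le hs1
      have r : ContinuousWithinAt F' (Set.Ici a₂) a₂ :=
        ((hd2 a₂ ha2m).2.continuousAt.continuousWithinAt).congr
          (fun s hs => hF'2 s hs) (hF'2 a₂ le_rfl)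
      have := l.union r
      rw [Set.Iic_union_Ici] at this
      exact this.mono (Set.subset_univ _)
    · refine ((hd2 t ⟨h2.le, ht.2⟩).2.continuousAt.congr ?_).continuousWithinAt
      filter_upwards [Ioi_mem_nhds h2] with s hs using (hF'2 s (le_of_lt hs)).symm
  · -- derivatives of F and positivity of F'
    intro t ht
    constructor
    · rcases lt_or_ge t b₁ with h | h
      · rw [hF'1 t h.le]
        refine ((hd1 t ⟨ht.1, h.le⟩).1).congr_of_eventuallyEq ?_
        filter_upwards [Iio_mem_nhds h] with s hs using hF1 s hs.le
      rcases eq_or_lt_of_le h with rfl | h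
      · rw [hF'1 b₁ le_rfl]
        have l : HasDerivWithinAt F (f₁' b₁) (Set.Iic b₁) b₁ :=
          ((hd1 b₁ hb1m).1).hasDerivWithinAt.congr (fun s hs => hF1 s hs) (hF1 b₁ le_rfl)
        have r : HasDerivWithinAt F (f₁' b₁) (Set.Ici b₁) b₁ := by
          refine ((hg b₁).hasDerivWithinAt.congr_of_eventuallyEq ?_ (hFg b₁ le_rfl hba.le))
          filter_upwards [self_mem_nhdsWithin,
            mem_nhdsWithin_of_mem_nhds (Iio_mem_nhds hba)] with s hs1 hs2
          exact hFg s hs1 hs2.le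
        have := l.union r
        rw [Set.Iic_union_Ici] at this
        exact hasDerivWithinAt_univ.mp this
      rcases lt_or_ge t a₂ with h2 | h2
      · rw [hF'g t h.le h2.le]
        refine (hg t).congr_of_eventuallyEq ?_
        filter_upwards [Ioo_mem_nhds h h2] with s hs using hFg s hs.1.le hs.2.le
      rcases eq_or_lt_of_le h2 with rfl | h2
      · rw [hF'2 a₂ le_rfl]
        have l : HasDerivWithinAt F (f₂' a₂) (Set.Iic a₂) a₂ := by
          rw [← hslope]
          refine ((hg a₂).hasDerivWithinAt.congr_of_eventuallyEq ?_ (hFg a₂ hba.le le_rfl))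
          filter_upwards [self_mem_nhdsWithin,
            mem_nhdsWithin_of_mem_nhds (Ioi_mem_nhds hba)] with s hs1 hs2
          exact hFg s hs2.le hs1
        have r : HasDerivWithinAt F (f₂' a₂) (Set.Ici a₂) a₂ :=
          ((hd2 a₂ ha2m).1).hasDerivWithinAt.congr (fun s hs => hF2 s hs) (hF2 a₂ le_rfl)
        have := l.union r
        rw [Set.Iic_union_Ici] at this
        exact hasDerivWithinAt_univ.mp this
      · rw [hF'2 t h2.le]
        refine ((hd2 t ⟨h2.le, ht.2⟩).1).congr_of_eventuallyEq ?_
        filter_upwards [Ioi_mem_nhds h2] with s hs using hF2 s hs.le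
    · rcases le_or_gt t b₁ with h | h
      · rw [hF'1 t h]; exact (hpos1 t ⟨ht.1, h⟩).2.1
      rcases le_or_gt t a₂ with h2 | h2
      · rw [hF'g t h.le h2]; exact hd1b
      · rw [hF'2 t h2.le]; exact (hpos2 t ⟨h2.le, ht.2⟩).2.1
  · -- second derivative inequality on the open pieces
    rintro t ((⟨ht1, ht2⟩ | ⟨ht1, ht2⟩) | ⟨ht1, ht2⟩)
    · refine ⟨f₁'' t, ?_, ?_⟩
      · refine ((hd1 t ⟨ht1.le, ht2.le⟩).2).congr_of_eventuallyEq ?_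
        filter_upwards [Iio_mem_nhds ht2] with s hs using hF'1 s hs.le
      · rw [hF1 t ht2.le, hF'1 t ht2.le]
        exact hpsc1 t ⟨ht1.le, ht2.le⟩
    · refine ⟨0, ?_, ?_⟩
      · refine (hasDerivAt_const t (f₁' b₁)).congr_of_eventuallyEq ?_
        filter_upwards [Ioo_mem_nhds ht1 ht2] with s hs using hF'g s hs.1.le hs.2.le
      · rw [hF'g t ht1.le ht2.le]
        have hFt : 0 < F t := hFpos t ⟨by linarith, by linarith⟩
        have : 0 < ((n : ℝ) - 1) / (2 * F t) := div_pos (by linarith) (by linarith)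
        exact mul_pos this hsq
    · refine ⟨f₂'' t, ?_, ?_⟩
      · refine ((hd2 t ⟨ht1.le, ht2.le⟩).2).congr_of_eventuallyEq ?_
        filter_upwards [Ioi_mem_nhds ht1] with s hs using hF'2 s hs.le
      · rw [hF2 t ht1.le, hF'2 t ht1.le]
        exact hpsc2 t ⟨ht1.le, ht2.le⟩
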